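/- In the group L(2,3,4) (generators x̄₁, x̄₂, x̄₃ with 2x̄₁ = 3x̄₂ = 4x̄₃), the element x̄₁ − 2x̄₃ is nonzero and satisfies 2(x̄₁ − 2x̄₃) = 0; that is, x̄₁ − 2x̄₃ has order exactly two. Moreover, with ω̄ = c̄ − x̄₁ − x̄₂ − x̄₃ one has x̄₁ = −6ω̄ + (x̄₁ − 2x̄₃). -/

import Mathlib

/-- The subgroup of relations defining the group `L(a,b,c)`. -/
def Lrel (a b c : ℤ) : AddSubgroup (ℤ × ℤ × ℤ) :=
  AddSubgroup.closure {((a, -b, 0) : ℤ × ℤ × ℤ), (0, b, -c)}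

/-- The rank-one abelian group `L(a,b,c)` on generators `x̄₁, x̄₂, x̄₃` with relations
`a·x̄₁ = b·x̄₂ = c·x̄₃`, realized as the quotient of `ℤ³` by those relations. -/
abbrev Lgrp (a b c : ℤ) : Type := (ℤ × ℤ × ℤ) ⧸ Lrel a b c

/-- The generator `x̄₁` of `L(a,b,c)`. -/
def Lx₁ (a b c : ℤ) : Lgrp a b c := QuotientAddGroup.mk (1, 0, 0)

/-- The generator `x̄₂` of `L(a,b,c)`. -/
def Lx₂ (a b c : ℤ) : Lgrp a b c := QuotientAddGroup.mk (0, 1, 0)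

/-- The generator `x̄₃` of `L(a,b,c)`. -/
def Lx₃ (a b c : ℤ) : Lgrp a b c := QuotientAddGroup.mk (0, 0, 1)

/-- The canonical element `c̄ = a·x̄₁` of `L(a,b,c)`. -/
def Lc (a b c : ℤ) : Lgrp a b c := a • Lx₁ a b c

/-- The dualizing element `ω̄ = c̄ − x̄₁ − x̄₂ − x̄₃` of `L(a,b,c)`. -/
def Lω (a b c : ℤ) : Lgrp a b c := Lc a b c - Lx₁ a b c - Lx₂ a b c - Lx₃ a b c

theorem stmt_15 :
    Lx₁ 2 3 4 - (2 : ℤ) • Lx₃ 2 3 4 ≠ 0 ∧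
    (2 : ℤ) • (Lx₁ 2 3 4 - (2 : ℤ) • Lx₃ 2 3 4) = 0 ∧
    Lx₁ 2 3 4 = (-6 : ℤ) • Lω 2 3 4 + (Lx₁ 2 3 4 - (2 : ℤ) • Lx₃ 2 3 4) := by
  have h1 : ((2:ℤ), (-3:ℤ), (0:ℤ)) ∈ Lrel 2 3 4 := AddSubgroup.subset_closure (by norm_num)
  have h2 : ((0:ℤ), (3:ℤ), (-4:ℤ)) ∈ Lrel 2 3 4 := AddSubgroup.subset_closure (by norm_num)
  have hkey : Lx₁ 2 3 4 - (2 : ℤ) • Lx₃ 2 3 4 = QuotientAddGroup.mk ((1:ℤ),(0:ℤ),(-2:ℤ)) := by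
    show QuotientAddGroup.mk _ - (2:ℤ) • QuotientAddGroup.mk _ = _
    rw [← QuotientAddGroup.mk_zsmul, ← QuotientAddGroup.mk_sub]
    norm_num
  have hω : Lω 2 3 4 = QuotientAddGroup.mk ((1:ℤ),(-1:ℤ),(-1:ℤ)) := by
    show (2:ℤ) • QuotientAddGroup.mk _ - QuotientAddGroup.mk _ - QuotientAddGroup.mk _ -
        QuotientAddGroup.mk _ = _
    rw [← QuotientAddGroup.mk_zsmul, ← QuotientAddGroup.mk_sub, ← QuotientAddGroup.mk_sub,
      ← QuotientAddGroup.mk_sub]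
    norm_num
  refine ⟨?_, ?_, ?_⟩
  · rw [hkey]
    intro h
    rw [QuotientAddGroup.eq_zero_iff] at h
    have hle : Lrel 2 3 4 ≤ ((Int.castAddHom (ZMod 2)).comp (AddMonoidHom.fst ℤ (ℤ × ℤ))).ker := by
      rw [Lrel, AddSubgroup.closure_le]
      rintro v (rfl | rfl) <;> simp [AddMonoidHom.mem_ker] <;> decide
    have := hle h
    simp [AddMonoidHom.mem_ker] at this
  · rw [hkey, ← QuotientAddGroup.mk_zsmul, QuotientAddGroup.eq_zero_iff]
    have := AddSubgroup.add_mem _ h1 h2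
    convert this using 1
    rfl
  · rw [hkey, hω, ← QuotientAddGroup.mk_zsmul, ← QuotientAddGroup.mk_add]
    show QuotientAddGroup.mk _ = _
    rw [QuotientAddGroup.eq_iff_sub_mem]
    have := AddSubgroup.add_mem _ (AddSubgroup.zsmul_mem _ h1 3) h2
    convert this using 1
    rfl
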